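/- With the same setup, the posterior covariance Σ = Π − K S K* (with K the Kalman gain and S = C Π C* + R) satisfies Σ = Π^{1/2} U (I + D²)^{-1} U* Π^{*/2}. In particular Σ^{1/2} := Π^{1/2} U (I + D²)^{-1/2} is a square-root factor of Σ and has rank at most r. -/

import Mathlib

open Matrix

private lemma diag_zero_of {r : ℕ} {g : Fin r → ℝ} (H : ∀ i, g i = 0) :
    Matrix.diagonal g = (0 : Matrix (Fin r) (Fin r) ℝ) := by
  rw [show g = fun _ => (0:ℝ) from funext H, Matrix.diagonal_zero]

/-- With the low-rank update setup, the posterior covariance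
`Σ = Π − K S Kᵀ` (with `K = Π Cᵀ S⁻¹` the Kalman gain and `S = C Π Cᵀ + R`) satisfies
`Σ = Π^{1/2} U (I + D²)⁻¹ Uᵀ Π^{*/2}`; moreover `Σ^{1/2} := Π^{1/2} U (I + D²)^{-1/2}`
is a square-root factor of `Σ`, which therefore has rank at most `r`. -/
theorem low_rank_posterior_covariance {n m r : ℕ}
    (Ph : Matrix (Fin n) (Fin r) ℝ) (C : Matrix (Fin m) (Fin n) ℝ)
    (Rh : Matrix (Fin m) (Fin m) ℝ)
    (U D : Matrix (Fin r) (Fin r) ℝ) (V : Matrix (Fin m) (Fin r) ℝ)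
    (hRh : IsUnit Rh.det)
    (hU₁ : U * Uᵀ = 1) (hU₂ : Uᵀ * U = 1) (hD : D.IsDiag) (hV : Vᵀ * V = 1)
    (hSVD : (Rh⁻¹ * C * Ph)ᵀ = U * D * Vᵀ) :
    let Pmat : Matrix (Fin n) (Fin n) ℝ := Ph * Phᵀ
    let S : Matrix (Fin m) (Fin m) ℝ := C * Pmat * Cᵀ + Rh * Rhᵀ
    let K : Matrix (Fin n) (Fin m) ℝ := Pmat * Cᵀ * S⁻¹
    let Sig : Matrix (Fin n) (Fin n) ℝ := Pmat - K * S * Kᵀ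
    let Sighalf : Matrix (Fin n) (Fin r) ℝ :=
      Ph * U * Matrix.diagonal fun k => (Real.sqrt (1 + D k k ^ 2))⁻¹
    Sig = Ph * U * (1 + D ^ 2)⁻¹ * Uᵀ * Phᵀ ∧ Sighalf * Sighalfᵀ = Sig ∧ Sig.rank ≤ r := by
  intro Pmat S K Sig Sighalf
  -- diagonal setup
  set d : Fin r → ℝ := fun i => D i i with hd
  have hDd : D = Matrix.diagonal d := (hD.diagonal_diag).symm
  have hDT : Dᵀ = D := by rw [hDd, Matrix.diagonal_transpose]
  set f : Fin r → ℝ := fun i => 1 + d i ^ 2 with hf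
  have hf0 : ∀ i, f i ≠ 0 := fun i => by positivity
  set E : Matrix (Fin r) (Fin r) ℝ := Matrix.diagonal f with hE
  set Einv : Matrix (Fin r) (Fin r) ℝ := Matrix.diagonal (fun i => (f i)⁻¹) with hEinv
  have hEE : E * Einv = 1 := by
    rw [hE, hEinv, Matrix.diagonal_mul_diagonal,
      show (fun i => f i * (f i)⁻¹) = fun _ : Fin r => (1:ℝ) from
        funext fun i => mul_inv_cancel₀ (hf0 i), Matrix.diagonal_one]
  have hEE' : Einv * E = 1 := by
    rw [hE, hEinv, Matrix.diagonal_mul_diagonal,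
      show (fun i => (f i)⁻¹ * f i) = fun _ : Fin r => (1:ℝ) from
        funext fun i => inv_mul_cancel₀ (hf0 i), Matrix.diagonal_one]
  have h1D2 : (1 : Matrix (Fin r) (Fin r) ℝ) + D ^ 2 = E := by
    rw [hDd, hE, sq, Matrix.diagonal_mul_diagonal, ← Matrix.diagonal_one,
      Matrix.diagonal_add]
    congr 1; funext i; simp [hf, sq]
  have h1D2inv : ((1 : Matrix (Fin r) (Fin r) ℝ) + D ^ 2)⁻¹ = Einv := by
    rw [h1D2]; exact Matrix.inv_eq_right_inv hEE
  set G : Matrix (Fin r) (Fin r) ℝ := Matrix.diagonal (fun i => d i ^ 2 * (f i)⁻¹) with hG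
  have hDEinvD : D * Einv * D = G := by
    rw [hDd, hEinv, hG, Matrix.diagonal_mul_diagonal, Matrix.diagonal_mul_diagonal]
    congr 1; funext i; ring
  have hDDG : D * D = G * E := by
    rw [hDd, hG, hE, Matrix.diagonal_mul_diagonal, Matrix.diagonal_mul_diagonal]
    congr 1; funext i; rw [mul_assoc, inv_mul_cancel₀ (hf0 i), mul_one, sq]
  have h1G : (1 : Matrix (Fin r) (Fin r) ℝ) - G = Einv := by
    rw [hG, hEinv, ← Matrix.diagonal_one, Matrix.diagonal_sub]
    congr 1; funext i
    have := hf0 i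
    field_simp [hf]
    simp only [hf]; ring
  -- SVD rearrangement
  have hB : Rh⁻¹ * C * Ph = V * D * Uᵀ := by
    have := congrArg Matrix.transpose hSVD
    simpa [Matrix.transpose_mul, Matrix.mul_assoc, hDT] using this
  have hCP : C * Ph = Rh * (V * (D * Uᵀ)) := by
    have h := congrArg (fun X => Rh * X) hB
    simp only [← Matrix.mul_assoc] at h
    rw [Matrix.mul_nonsing_inv _ hRh, Matrix.one_mul] at h
    simpa [Matrix.mul_assoc] using h
  have hPC : Phᵀ * Cᵀ = U * (D * (Vᵀ * Rhᵀ)) := by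
    have := congrArg Matrix.transpose hCP
    simpa [Matrix.transpose_mul, hDT, Matrix.mul_assoc] using this
  -- S factorization
  set M : Matrix (Fin m) (Fin m) ℝ := 1 + V * (G * E) * Vᵀ with hM
  have hSfac : S = Rh * (M * Rhᵀ) := by
    show C * Pmat * Cᵀ + Rh * Rhᵀ = _
    have : C * Pmat * Cᵀ = (C * Ph) * (Phᵀ * Cᵀ) := by
      simp [Pmat, Matrix.mul_assoc]
    rw [this, hCP, hPC, hM]
    have key : Rh * (V * (D * Uᵀ)) * (U * (D * (Vᵀ * Rhᵀ)))
        = Rh * (V * (G * E) * Vᵀ * Rhᵀ) := by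
      calc Rh * (V * (D * Uᵀ)) * (U * (D * (Vᵀ * Rhᵀ)))
          = Rh * (V * (D * ((Uᵀ * U) * (D * (Vᵀ * Rhᵀ))))) := by simp [Matrix.mul_assoc]
        _ = Rh * (V * ((D * D) * (Vᵀ * Rhᵀ))) := by rw [hU₂]; simp [Matrix.mul_assoc]
        _ = Rh * (V * (G * E) * Vᵀ * Rhᵀ) := by rw [hDDG]; simp [Matrix.mul_assoc]
    rw [key, Matrix.add_mul, Matrix.one_mul, Matrix.mul_add, add_comm]
  -- inverse of M
  set N : Matrix (Fin m) (Fin m) ℝ := 1 - V * G * Vᵀ with hN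
  have hGEG : G * E - G - G * E * G = 0 := by
    rw [hG, hE]
    simp only [Matrix.diagonal_mul_diagonal, Matrix.diagonal_sub]
    apply diag_zero_of
    intro i
    simp only [hf, hd]
    have hne : (1:ℝ) + D i i ^ 2 ≠ 0 := by positivity
    field_simp
    ring
  have hGEG' : G * E - G - G * (G * E) = 0 := by
    rw [hG, hE]
    simp only [Matrix.diagonal_mul_diagonal, Matrix.diagonal_sub]
    apply diag_zero_of
    intro i
    simp only [hf, hd]
    have hne : (1:ℝ) + D i i ^ 2 ≠ 0 := by positivity
    field_simp
    ring
  have hMN : M * N = 1 := by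
    rw [hM, hN]
    have h2 : V * (G * E) * Vᵀ * (V * G * Vᵀ) = V * (G * E * G) * Vᵀ := by
      calc V * (G * E) * Vᵀ * (V * G * Vᵀ)
          = V * ((G * E) * ((Vᵀ * V) * (G * Vᵀ))) := by simp [Matrix.mul_assoc]
        _ = V * (G * E * G) * Vᵀ := by rw [hV]; simp [Matrix.mul_assoc]
    calc (1 + V * (G * E) * Vᵀ) * (1 - V * G * Vᵀ)
        = 1 + (V * (G * E) * Vᵀ - V * G * Vᵀ - V * (G * E) * Vᵀ * (V * G * Vᵀ)) := by
          noncomm_ring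
      _ = 1 + (V * (G * E - G - G * E * G) * Vᵀ) := by
          rw [h2]
          congr 1
          simp only [Matrix.sub_mul, Matrix.mul_sub]
      _ = 1 := by rw [hGEG]; simp
  have hNM : N * M = 1 := by
    rw [hM, hN]
    have h2 : V * G * Vᵀ * (V * (G * E) * Vᵀ) = V * (G * (G * E)) * Vᵀ := by
      calc V * G * Vᵀ * (V * (G * E) * Vᵀ)
          = V * (G * ((Vᵀ * V) * ((G * E) * Vᵀ))) := by simp [Matrix.mul_assoc]
        _ = V * (G * (G * E)) * Vᵀ := by rw [hV]; simp [Matrix.mul_assoc]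
    calc (1 - V * G * Vᵀ) * (1 + V * (G * E) * Vᵀ)
        = 1 + (V * (G * E) * Vᵀ - V * G * Vᵀ - V * G * Vᵀ * (V * (G * E) * Vᵀ)) := by
          noncomm_ring
      _ = 1 + (V * (G * E - G - G * (G * E)) * Vᵀ) := by
          rw [h2]
          congr 1
          simp only [Matrix.sub_mul, Matrix.mul_sub]
      _ = 1 := by rw [hGEG']; simp
  -- S inverse
  have hRhT : IsUnit Rhᵀ.det := by rwa [Matrix.det_transpose]
  set W : Matrix (Fin m) (Fin m) ℝ := Rhᵀ⁻¹ * (N * Rh⁻¹) with hW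
  have hSW : S * W = 1 := by
    rw [hSfac, hW]
    calc Rh * (M * Rhᵀ) * (Rhᵀ⁻¹ * (N * Rh⁻¹))
        = Rh * (M * (Rhᵀ * (Rhᵀ⁻¹ * (N * Rh⁻¹)))) := by simp [Matrix.mul_assoc]
      _ = Rh * (M * (N * Rh⁻¹)) := by rw [Matrix.mul_nonsing_inv_cancel_left _ _ hRhT]
      _ = Rh * ((M * N) * Rh⁻¹) := by simp [Matrix.mul_assoc]
      _ = 1 := by rw [hMN, Matrix.one_mul, Matrix.mul_nonsing_inv _ hRh]
  have hWS : W * S = 1 := by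
    rw [hSfac, hW]
    calc Rhᵀ⁻¹ * (N * Rh⁻¹) * (Rh * (M * Rhᵀ))
        = Rhᵀ⁻¹ * (N * (Rh⁻¹ * (Rh * (M * Rhᵀ)))) := by simp [Matrix.mul_assoc]
      _ = Rhᵀ⁻¹ * (N * (M * Rhᵀ)) := by rw [Matrix.nonsing_inv_mul_cancel_left _ _ hRh]
      _ = Rhᵀ⁻¹ * ((N * M) * Rhᵀ) := by simp [Matrix.mul_assoc]
      _ = 1 := by rw [hNM, Matrix.one_mul, Matrix.nonsing_inv_mul _ hRhT]
  have hSinv : S⁻¹ = W := Matrix.inv_eq_right_inv hSW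
  -- symmetry facts
  have hPT : Pmatᵀ = Pmat := by simp [Pmat, Matrix.transpose_mul]
  have hST : Sᵀ = S := by
    show (C * Pmat * Cᵀ + Rh * Rhᵀ)ᵀ = C * Pmat * Cᵀ + Rh * Rhᵀ
    simp [Matrix.transpose_add, Matrix.transpose_mul, hPT, Matrix.mul_assoc]
  -- compute K S Kᵀ
  have hKT : Kᵀ = W * (C * Pmat) := by
    show (Pmat * Cᵀ * S⁻¹)ᵀ = _
    rw [Matrix.transpose_mul, Matrix.transpose_mul, Matrix.transpose_nonsing_inv, hST, hSinv,
      Matrix.transpose_transpose, hPT, Matrix.mul_assoc]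
  have hKS : K * S = Pmat * Cᵀ := by
    show Pmat * Cᵀ * S⁻¹ * S = _
    rw [hSinv, Matrix.mul_assoc, hWS, Matrix.mul_one]
  have hVNV : Vᵀ * (N * V) = Einv := by
    rw [hN]
    have : (1 - V * G * Vᵀ) * V = V - V * G * (Vᵀ * V) := by
      simp [Matrix.sub_mul, Matrix.mul_assoc]
    rw [this, hV, Matrix.mul_one, Matrix.mul_sub, hV, ← Matrix.mul_assoc, hV, Matrix.one_mul,
      h1G]
  have hKSK : K * S * Kᵀ = Ph * (U * (G * (Uᵀ * Phᵀ))) := by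
    rw [hKS, hKT, hW]
    have hPmC : Pmat * Cᵀ = Ph * (U * (D * (Vᵀ * Rhᵀ))) := by
      show Ph * Phᵀ * Cᵀ = _
      rw [Matrix.mul_assoc, hPC]
    have hCPm : C * Pmat = Rh * (V * (D * (Uᵀ * Phᵀ))) := by
      show C * (Ph * Phᵀ) = _
      rw [← Matrix.mul_assoc, hCP]
      simp [Matrix.mul_assoc]
    rw [hPmC, hCPm]
    simp only [Matrix.mul_assoc]
    rw [Matrix.mul_nonsing_inv_cancel_left _ _ hRhT,
      Matrix.nonsing_inv_mul_cancel_left _ _ hRh]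
    have : N * (V * (D * (Uᵀ * Phᵀ))) = (N * V) * (D * (Uᵀ * Phᵀ)) := by
      simp [Matrix.mul_assoc]
    rw [this, ← Matrix.mul_assoc Vᵀ, hVNV]
    have : D * (Einv * (D * (Uᵀ * Phᵀ))) = (D * Einv * D) * (Uᵀ * Phᵀ) := by
      simp [Matrix.mul_assoc]
    rw [this, hDEinvD]
  -- final formula
  have hSig : Sig = Ph * U * Einv * Uᵀ * Phᵀ := by
    show Pmat - K * S * Kᵀ = _
    rw [hKSK]
    have hPm : Pmat = Ph * (U * ((1 : Matrix (Fin r) (Fin r) ℝ) * (Uᵀ * Phᵀ))) := by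
      show Ph * Phᵀ = _
      rw [Matrix.one_mul, ← Matrix.mul_assoc U Uᵀ Phᵀ, hU₁, Matrix.one_mul]
    rw [hPm]
    have : Ph * (U * ((1 : Matrix (Fin r) (Fin r) ℝ) * (Uᵀ * Phᵀ))) - Ph * (U * (G * (Uᵀ * Phᵀ)))
        = Ph * (U * (((1 : Matrix (Fin r) (Fin r) ℝ) - G) * (Uᵀ * Phᵀ))) := by
      simp only [Matrix.sub_mul, Matrix.mul_sub]
    rw [this, h1G]
    simp [Matrix.mul_assoc]
  have hhalf : Sighalf * Sighalfᵀ = Sig := by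
    show Ph * U * Matrix.diagonal (fun k => (Real.sqrt (1 + D k k ^ 2))⁻¹) *
      (Ph * U * Matrix.diagonal (fun k => (Real.sqrt (1 + D k k ^ 2))⁻¹))ᵀ = Sig
    rw [hSig]
    simp only [Matrix.transpose_mul, Matrix.diagonal_transpose]
    have hassoc : Ph * U * Matrix.diagonal (fun k => (Real.sqrt (1 + D k k ^ 2))⁻¹) *
        (Matrix.diagonal (fun k => (Real.sqrt (1 + D k k ^ 2))⁻¹) * (Uᵀ * Phᵀ))
        = Ph * U * (Matrix.diagonal (fun k => (Real.sqrt (1 + D k k ^ 2))⁻¹) *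
          Matrix.diagonal (fun k => (Real.sqrt (1 + D k k ^ 2))⁻¹)) * (Uᵀ * Phᵀ) := by
      simp only [Matrix.mul_assoc]
    rw [hassoc, Matrix.diagonal_mul_diagonal]
    have hdiag : (Matrix.diagonal fun k => (Real.sqrt (1 + D k k ^ 2))⁻¹ *
        (Real.sqrt (1 + D k k ^ 2))⁻¹) = Einv := by
      rw [hEinv]
      apply congrArg Matrix.diagonal
      funext i
      rw [← mul_inv, Real.mul_self_sqrt (by positivity)]
    rw [hdiag]
    simp [Matrix.mul_assoc]
  refine ⟨by rw [hSig, h1D2inv], hhalf, ?_⟩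
  rw [← hhalf]
  exact le_trans (Matrix.rank_mul_le_left _ _)
    (by simpa using Matrix.rank_le_card_width Sighalf)
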